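/- With W nonnegative row-stochastic irreducible, left Perron eigenvector αᵀ (αᵀ𝟙 = 1), T = diag(p₁,...,pₙ) with 0 < pᵢ ≤ 1, and H(σ) = σ(I − (I−σT)W)⁻¹T, one has H(σ) = 𝟙 αᵀT/(αᵀT𝟙) + O(σ) as σ → 0⁺; i.e., there exist M, σ̄ > 0 with ‖H(σ) − 𝟙 αᵀT/(αᵀT𝟙)‖ ≤ M σ for all σ ∈ (0, σ̄]. -/

import Mathlib

open Matrix Polynomial

def MatIrreducible {n : ℕ} (W : Matrix (Fin n) (Fin n) ℝ) : Prop :=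
  ∀ i j, ∃ k : ℕ, 0 < (W ^ k) i j

noncomputable def vecEnorm {n : ℕ} (v : Fin n → ℝ) : ℝ :=
  Real.sqrt (∑ i, (v i) ^ 2)

noncomputable def opNorm {n : ℕ} (A : Matrix (Fin n) (Fin n) ℝ) : ℝ :=
  sSup {r : ℝ | ∃ x : Fin n → ℝ, vecEnorm x = 1 ∧ r = vecEnorm (A *ᵥ x)}

lemma opNorm_le_sum_abs {n : ℕ} (A : Matrix (Fin n) (Fin n) ℝ) :
    opNorm A ≤ ∑ i, ∑ j, |A i j| := by
  have hS : (0:ℝ) ≤ ∑ i, ∑ j, |A i j| := by positivity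
  apply Real.sSup_le _ hS
  rintro r ⟨x, hx, rfl⟩
  have hx2 : ∑ i, (x i)^2 = 1 := by
    have := congrArg (fun t => t^2) hx
    simpa [vecEnorm, Real.sq_sqrt (by positivity : (0:ℝ) ≤ ∑ i, (x i)^2)] using this
  have hxj : ∀ j, |x j| ≤ 1 := by
    intro j
    have h1 : (x j)^2 ≤ 1 := by
      rw [← hx2]
      exact Finset.single_le_sum (fun i _ => sq_nonneg (x i)) (Finset.mem_univ j)
    nlinarith [abs_nonneg (x j), sq_abs (x j)]
  have hrow : ∀ i, |(A *ᵥ x) i| ≤ ∑ j, |A i j| := by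
    intro i
    calc |(A *ᵥ x) i| ≤ ∑ j, |A i j * x j| := by
          simpa [Matrix.mulVec, dotProduct, abs_mul] using Finset.abs_sum_le_sum_abs (fun j => A i j * x j) Finset.univ
      _ ≤ ∑ j, |A i j| := by
          apply Finset.sum_le_sum
          intro j _
          rw [abs_mul]
          exact mul_le_of_le_one_right (abs_nonneg _) (hxj j)
  have key : ∑ i, ((A *ᵥ x) i)^2 ≤ (∑ i, ∑ j, |A i j|)^2 := by
    have h1 : ∀ i, ((A *ᵥ x) i)^2 ≤ (∑ j, |A i j|)^2 := by
      intro i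
      rw [← sq_abs]
      exact pow_le_pow_left₀ (abs_nonneg _) (hrow i) 2
    calc ∑ i, ((A *ᵥ x) i)^2 ≤ ∑ i, (∑ j, |A i j|)^2 := Finset.sum_le_sum fun i _ => h1 i
      _ ≤ (∑ i, ∑ j, |A i j|)^2 := by
          rw [sq (∑ i, ∑ j, |A i j|)]
          calc ∑ i, (∑ j, |A i j|)^2 ≤ ∑ i, (∑ j, |A i j|) * (∑ i, ∑ j, |A i j|) := by
                apply Finset.sum_le_sum
                intro i _
                rw [sq]
                apply mul_le_mul_of_nonneg_left _ (by positivity)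
                exact Finset.single_le_sum (f := fun i => ∑ j, |A i j|)
                  (fun k _ => by positivity) (Finset.mem_univ i)
            _ = (∑ i, ∑ j, |A i j|) * (∑ i, ∑ j, |A i j|) := by rw [← Finset.sum_mul]
  calc vecEnorm (A *ᵥ x) ≤ Real.sqrt ((∑ i, ∑ j, |A i j|)^2) := Real.sqrt_le_sqrt key
    _ = ∑ i, ∑ j, |A i j| := Real.sqrt_sq hS

lemma poly_eval_abs_le (q : ℝ[X]) {x : ℝ} (h0 : 0 ≤ x) (h1 : x ≤ 1) :
    |q.eval x| ≤ ∑ k ∈ Finset.range (q.natDegree + 1), |q.coeff k| := by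
  rw [Polynomial.eval_eq_sum_range]
  calc |∑ k ∈ Finset.range (q.natDegree + 1), q.coeff k * x ^ k|
      ≤ ∑ k ∈ Finset.range (q.natDegree + 1), |q.coeff k * x ^ k| :=
        Finset.abs_sum_le_sum_abs _ _
    _ ≤ ∑ k ∈ Finset.range (q.natDegree + 1), |q.coeff k| := by
        apply Finset.sum_le_sum
        intro k _
        rw [abs_mul]
        apply mul_le_of_le_one_right (abs_nonneg _)
        rw [abs_pow]
        exact pow_le_one₀ (abs_nonneg _) (by rwa [abs_of_nonneg h0])

section
variable {n : ℕ} (W : Matrix (Fin n) (Fin n) ℝ)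

lemma pow_nonneg_rs (hWnn : ∀ i j, 0 ≤ W i j) (hWrs : ∀ i, ∑ j, W i j = 1) (k : ℕ) :
    (∀ i j, 0 ≤ (W ^ k) i j) ∧ (∀ i, ∑ j, (W ^ k) i j = 1) := by
  induction k with
  | zero =>
    constructor
    · intro i j
      by_cases h : i = j <;> simp [Matrix.one_apply, h]
    · intro i; simp [Matrix.one_apply]
  | succ k ih =>
    have hmul : ∀ i j, (W ^ (k+1)) i j = ∑ l, W i l * (W ^ k) l j := by
      intro i j
      rw [pow_succ'] -- W^(k+1) = W * W^k
      rfl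
    constructor
    · intro i j
      rw [hmul]
      exact Finset.sum_nonneg fun l _ => mul_nonneg (hWnn i l) (ih.1 l j)
    · intro i
      simp only [hmul]
      rw [Finset.sum_comm]
      calc ∑ l, ∑ j, W i l * (W ^ k) l j = ∑ l, W i l * ∑ j, (W ^ k) l j := by
            simp [Finset.mul_sum]
        _ = 1 := by simp [ih.2, hWrs i]

lemma eig_const (hWnn : ∀ i j, 0 ≤ W i j) (hWrs : ∀ i, ∑ j, W i j = 1)
    (hWirr : MatIrreducible W) (v : Fin n → ℝ) (hv : W *ᵥ v = v) (i j : Fin n) :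
    v j = v i := by
  have : Nonempty (Fin n) := ⟨i⟩
  obtain ⟨m, hm⟩ := Finite.exists_max v
  have hpow : ∀ k, (W ^ k) *ᵥ v = v := by
    intro k
    induction k with
    | zero => simp
    | succ k ih => rw [pow_succ, ← Matrix.mulVec_mulVec, hv, ih]
  have key : ∀ j, v j = v m := by
    intro j
    obtain ⟨k, hk⟩ := hWirr m j
    have h1 := (pow_nonneg_rs W hWnn hWrs k).1
    have h2 := (pow_nonneg_rs W hWnn hWrs k).2 m
    have hsum : ∑ l, (W ^ k) m l * (v m - v l) = 0 := by
      have h3 : (W ^ k *ᵥ v) m = v m := by rw [hpow]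
      have h4 : ∑ l, (W ^ k) m l * v l = v m := by
        simpa [Matrix.mulVec, dotProduct] using h3
      calc ∑ l, (W ^ k) m l * (v m - v l)
          = (∑ l, (W ^ k) m l) * v m - ∑ l, (W ^ k) m l * v l := by
            rw [Finset.sum_mul]; rw [← Finset.sum_sub_distrib]; exact Finset.sum_congr rfl (fun l _ => by ring)
        _ = 0 := by rw [h2, h4]; ring
    have hterm := (Finset.sum_eq_zero_iff_of_nonneg
      (fun l _ => mul_nonneg (h1 m l) (sub_nonneg.2 (hm l)))).1 hsum j (Finset.mem_univ j)
    rcases mul_eq_zero.1 hterm with h | h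
    · exact absurd h (ne_of_gt hk)
    · linarith [sub_eq_zero.1 h]
  rw [key j, key i]

end

section adj
variable {n : ℕ} (W : Matrix (Fin n) (Fin n) ℝ) (α : Fin n → ℝ)

lemma adj_structure (hn : 0 < n)
    (hWnn : ∀ i j, 0 ≤ W i j) (hWrs : ∀ i, ∑ j, W i j = 1)
    (hWirr : MatIrreducible W)
    (hα : α ᵥ* W = α) (hαnn : ∀ i, 0 ≤ α i) (hαsum : ∑ i, α i = 1) :
    ∃ c : ℝ, c ≠ 0 ∧ ∀ i j, (1 - W).adjugate i j = c * α j := by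
  set B : Matrix (Fin n) (Fin n) ℝ := 1 - W with hB
  have i0 : Fin n := ⟨0, hn⟩
  have hB1 : B *ᵥ (fun _ => (1:ℝ)) = 0 := by
    funext i
    simp [hB, Matrix.sub_mulVec, Matrix.mulVec, dotProduct, hWrs i, Matrix.one_apply,
      Finset.sum_ite_eq]
  have hone_ne : (fun _ => (1:ℝ)) ≠ (0 : Fin n → ℝ) := by
    intro h
    have := congrFun h i0
    simp at this
  have hdetB : B.det = 0 :=
    (Matrix.exists_mulVec_eq_zero_iff).1 ⟨fun _ => 1, hone_ne, hB1⟩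
  have hker : ∀ v : Fin n → ℝ, B *ᵥ v = 0 → ∀ i j, v j = v i := by
    intro v hv i j
    apply eig_const W hWnn hWrs hWirr
    have h2 : (1 : Matrix (Fin n) (Fin n) ℝ) *ᵥ v - W *ᵥ v = 0 := by
      rw [← Matrix.sub_mulVec]; exact hv
    rw [Matrix.one_mulVec] at h2
    funext k
    have := congrFun h2 k
    simp only [Pi.sub_apply, Pi.zero_apply] at this
    linarith
  -- columns of adjugate are constant
  have hBadj : B * B.adjugate = 0 := by
    rw [Matrix.mul_adjugate, hdetB, zero_smul]
  have hcol : ∀ i j, B.adjugate i j = B.adjugate i0 j := by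
    intro i j
    apply hker (fun k => B.adjugate k j)
    · funext k
      have := congrFun (congrFun hBadj k) j
      simpa [Matrix.mul_apply, Matrix.mulVec, dotProduct] using this
  set β : Fin n → ℝ := fun j => B.adjugate i0 j with hβdef
  have hadjB : B.adjugate * B = 0 := by
    rw [Matrix.adjugate_mul, hdetB, zero_smul]
  have hβB : β ᵥ* B = 0 := by
    funext j
    have := congrFun (congrFun hadjB i0) j
    simpa [Matrix.mul_apply, Matrix.vecMul, dotProduct, hβdef] using this
  -- α is in the left kernel, which is 1-dimensional
  have hαB : α ᵥ* B = 0 := by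
    funext j
    rw [hB, Matrix.vecMul_sub, Matrix.vecMul_one, hα, sub_self]
  -- kernel of B is span of ones
  have hkerB : LinearMap.ker B.mulVecLin = Submodule.span ℝ {(fun _ => (1:ℝ))} := by
    apply le_antisymm
    · intro v hv
      rw [LinearMap.mem_ker, Matrix.mulVecLin_apply] at hv
      have : v = v i0 • (fun _ => (1:ℝ)) := by
        funext k
        simp [hker v hv i0 k]
      rw [this]
      exact Submodule.smul_mem _ _ (Submodule.mem_span_singleton_self _)
    · rw [Submodule.span_singleton_le_iff_mem, LinearMap.mem_ker, Matrix.mulVecLin_apply]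
      exact hB1
  have hfink : Module.finrank ℝ (LinearMap.ker B.mulVecLin) = 1 := by
    rw [hkerB]
    exact finrank_span_singleton hone_ne
  have hrankB : B.rank + 1 = n := by
    have := LinearMap.finrank_range_add_finrank_ker B.mulVecLin
    rw [hfink, Module.finrank_fin_fun] at this
    rw [Matrix.rank]
    exact this
  have hrankBT : Bᵀ.rank + 1 = n := by rw [Matrix.rank_transpose]; exact hrankB
  have hfinkT : Module.finrank ℝ (LinearMap.ker Bᵀ.mulVecLin) = 1 := by
    have := LinearMap.finrank_range_add_finrank_ker Bᵀ.mulVecLin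
    rw [Module.finrank_fin_fun] at this
    rw [Matrix.rank] at hrankBT
    omega
  have hαne : α ≠ 0 := by
    intro h
    rw [h] at hαsum
    simp at hαsum
  have hαker : α ∈ LinearMap.ker Bᵀ.mulVecLin := by
    rw [LinearMap.mem_ker, Matrix.mulVecLin_apply, Matrix.mulVec_transpose]
    exact hαB
  have hβker : β ∈ LinearMap.ker Bᵀ.mulVecLin := by
    rw [LinearMap.mem_ker, Matrix.mulVecLin_apply, Matrix.mulVec_transpose]
    exact hβB
  have hspan : Submodule.span ℝ {α} = LinearMap.ker Bᵀ.mulVecLin := by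
    apply Submodule.eq_of_le_of_finrank_eq
    · rw [Submodule.span_singleton_le_iff_mem]; exact hαker
    · rw [hfinkT]; exact finrank_span_singleton hαne
  obtain ⟨c, hc⟩ := Submodule.mem_span_singleton.1 (hspan ▸ hβker)
  -- c ≠ 0 : show β jstar ≠ 0 where α jstar ≠ 0
  obtain ⟨js, hjs⟩ : ∃ j, α j ≠ 0 := by
    by_contra h
    push_neg at h
    rw [Finset.sum_congr rfl (fun j _ => h j)] at hαsum
    simp at hαsum
  have hβjs : β js ≠ 0 := by
    rw [hβdef]
    simp only
    rw [Matrix.adjugate_apply]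
    intro hdet0
    obtain ⟨v, hvne, hv⟩ := Matrix.exists_mulVec_eq_zero_iff.2 hdet0
    -- rows k ≠ js of the updated matrix are rows of B
    have hrow : ∀ k, k ≠ js → (B *ᵥ v) k = 0 := by
      intro k hk
      have := congrFun hv k
      rwa [Matrix.mulVec, Matrix.updateRow_ne hk] at this
    have hvi0 : v i0 = 0 := by
      have := congrFun hv js
      rw [Matrix.mulVec, Matrix.updateRow_self] at this
      simpa [dotProduct, Pi.single_apply] using this
    have hjsrow : (B *ᵥ v) js = 0 := by
      have hdot : ∑ k, α k * (B *ᵥ v) k = 0 := by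
        have : α ᵥ* B ⬝ᵥ v = α ⬝ᵥ (B *ᵥ v) := (Matrix.dotProduct_mulVec α B v).symm
        rw [hαB] at this
        simpa [dotProduct] using this.symm
      have : α js * (B *ᵥ v) js = 0 := by
        rw [← hdot]
        rw [Finset.sum_eq_single js]
        · intro k _ hk
          rw [hrow k hk, mul_zero]
        · intro h; exact absurd (Finset.mem_univ js) h
      rcases mul_eq_zero.1 this with h | h
      · exact absurd h hjs
      · exact h
    have hBv : B *ᵥ v = 0 := by
      funext k
      by_cases hk : k = js
      · rw [hk]; exact hjsrow
      · exact hrow k hk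
    apply hvne
    funext k
    rw [hker v hBv i0 k, hvi0]
    rfl
  have hcne : c ≠ 0 := by
    intro h
    rw [h, zero_smul] at hc
    exact hβjs (by rw [← hc]; rfl)
  refine ⟨c, hcne, fun i j => ?_⟩
  rw [hcol i j]
  have h2 := congrFun hc j
  simp only [Pi.smul_apply, smul_eq_mul] at h2
  exact h2.symm

end adj



section poly
variable {n : ℕ}

noncomputable def Apoly (B Cm : Matrix (Fin n) (Fin n) ℝ) :
    Matrix (Fin n) (Fin n) ℝ[X] :=
  B.map Polynomial.C + (Polynomial.X : ℝ[X]) • Cm.map Polynomial.C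

lemma Apoly_map (B Cm : Matrix (Fin n) (Fin n) ℝ) (σ : ℝ) :
    (Apoly B Cm).map (evalRingHom σ) = B + σ • Cm := by
  ext i j
  simp only [Apoly, Matrix.map_apply, Matrix.add_apply, Matrix.smul_apply, smul_eq_mul,
    coe_evalRingHom, eval_add, eval_mul, eval_C, eval_X, Pi.smul_apply]

lemma Apoly_row_sums (W : Matrix (Fin n) (Fin n) ℝ) (p : Fin n → ℝ)
    (hWrs : ∀ i, ∑ j, W i j = 1) :
    (Apoly (1 - W) (Matrix.diagonal p * W)) *ᵥ (fun _ => (1:ℝ[X]))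
      = fun i => Polynomial.X * Polynomial.C (p i) := by
  funext i
  have h1 : ∑ j, (1 - W) i j = 0 := by
    simp [Matrix.sub_apply, Finset.sum_sub_distrib, Matrix.one_apply, hWrs i]
  have h2 : ∑ j, (Matrix.diagonal p * W) i j = p i := by
    rw [show Matrix.diagonal p * W = Matrix.of (fun i j => p i * W i j) by
      ext a b; simp [Matrix.mul_apply, Matrix.diagonal_apply, ite_mul, Finset.sum_ite_eq]]
    simp only [Matrix.of_apply]
    rw [← Finset.mul_sum, hWrs i, mul_one]
  simp only [Matrix.mulVec, dotProduct, Apoly, Matrix.add_apply, Matrix.smul_apply,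
    Matrix.map_apply, smul_eq_mul, mul_one]
  rw [Finset.sum_add_distrib, ← map_sum (Polynomial.C : ℝ →+* ℝ[X]) _ Finset.univ, h1,
    map_zero, zero_add, ← Finset.mul_sum,
    ← map_sum (Polynomial.C : ℝ →+* ℝ[X]) _ Finset.univ, h2]

lemma Apoly_det_key (W : Matrix (Fin n) (Fin n) ℝ) (p : Fin n → ℝ)
    (hWrs : ∀ i, ∑ j, W i j = 1) (i : Fin n) :
    Polynomial.X * ((Apoly (1 - W) (Matrix.diagonal p * W)).adjugate
        *ᵥ (fun j => Polynomial.C (p j))) i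
      = (Apoly (1 - W) (Matrix.diagonal p * W)).det := by
  set Ap := Apoly (1 - W) (Matrix.diagonal p * W) with hAp
  have h1 : Ap.adjugate * Ap = Ap.det • 1 := Matrix.adjugate_mul Ap
  have h2 : (Ap.adjugate * Ap) *ᵥ (fun _ => (1:ℝ[X])) = Ap.det • (fun _ => (1:ℝ[X])) := by
    rw [h1]
    funext k
    simp [Matrix.smul_mulVec, Matrix.one_mulVec]
  rw [← Matrix.mulVec_mulVec, Apoly_row_sums W p hWrs] at h2
  have h3 := congrFun h2 i
  simp only [Matrix.mulVec, dotProduct, Pi.smul_apply, smul_eq_mul, mul_one] at h3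
  rw [← h3, Matrix.mulVec, dotProduct, Finset.mul_sum]
  apply Finset.sum_congr rfl
  intro j _
  ring
end poly

lemma main_analytic {n : ℕ} (B Cm : Matrix (Fin n) (Fin n) ℝ) (p α : Fin n → ℝ)
    (s : ℝ) (g : ℝ[X]) (a : Fin n → Fin n → ℝ[X])
    (hdet : ∀ σ : ℝ, (B + σ • Cm).det = σ * g.eval σ)
    (hadj : ∀ (σ : ℝ) i j, (a i j).eval σ = (B + σ • Cm).adjugate i j)
    (hg0 : g.eval 0 ≠ 0)
    (hL : ∀ i j, (a i j).eval 0 * p j / g.eval 0 = s⁻¹ * (α j * p j)) :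
    ∃ M > (0 : ℝ), ∃ σbar > (0 : ℝ), ∀ σ : ℝ, 0 < σ → σ ≤ σbar →
      opNorm (σ • (B + σ • Cm)⁻¹ * Matrix.diagonal p
          - s⁻¹ • Matrix.vecMulVec (fun _ => (1 : ℝ)) (fun i => α i * p i))
        ≤ M * σ := by
  set g0 : ℝ := g.eval 0 with hg0def
  -- continuity of polynomial evaluation at 0
  have hcont : ContinuousAt (fun x => g.eval x) 0 := g.continuous.continuousAt
  obtain ⟨δ, hδpos, hδ⟩ := Metric.continuousAt_iff.1 hcont (|g0| / 2)
    (by positivity)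
  set N : Fin n → Fin n → ℝ[X] := fun i j =>
    a i j * Polynomial.C g0 - Polynomial.C ((a i j).eval 0) * g with hN
  set K : Fin n → Fin n → ℝ := fun i j =>
    ∑ k ∈ Finset.range ((N i j).divX.natDegree + 1), |(N i j).divX.coeff k| with hK
  have hKnn : ∀ i j, 0 ≤ K i j := fun i j =>
    Finset.sum_nonneg fun k _ => abs_nonneg _
  set M : ℝ := 1 + ∑ i, ∑ j, |p j| * K i j * (2 / g0 ^ 2) with hM
  have hMpos : 0 < M := by
    have : (0:ℝ) ≤ ∑ i, ∑ j, |p j| * K i j * (2 / g0 ^ 2) := by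
      apply Finset.sum_nonneg
      intro i _
      apply Finset.sum_nonneg
      intro j _
      have := hKnn i j
      positivity
    simp only [hM]; linarith
  refine ⟨M, hMpos, min (δ/2) 1, by positivity, fun σ hσ hσbar => ?_⟩
  have hσ1 : σ ≤ 1 := le_trans hσbar (min_le_right _ _)
  have hσδ : |σ - 0| < δ := by
    rw [sub_zero, abs_of_pos hσ]
    calc σ ≤ δ/2 := le_trans hσbar (min_le_left _ _)
      _ < δ := by linarith
  have hgs : |g.eval σ - g0| < |g0|/2 := by
    have := hδ (by simpa [Real.dist_eq] using hσδ)
    simpa [Real.dist_eq, hg0def] using this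
  have hgσlb : |g0|/2 ≤ |g.eval σ| := by
    have := abs_sub_abs_le_abs_sub (g0) (g.eval σ)
    rw [abs_sub_comm] at hgs
    linarith [abs_sub_abs_le_abs_sub g0 (g.eval σ)]
  have hgσne : g.eval σ ≠ 0 := by
    intro h
    rw [h, abs_zero] at hgσlb
    have : |g0| > 0 := abs_pos.2 hg0
    linarith
  set gσ : ℝ := g.eval σ with hgσdef
  have hdetne : (B + σ • Cm).det = σ * gσ := hdet σ
  have hinv : (B + σ • Cm)⁻¹ = (σ * gσ)⁻¹ • (B + σ • Cm).adjugate := by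
    rw [Matrix.inv_def, Ring.inverse_eq_inv, hdetne]
  -- entry formula
  set D : Matrix (Fin n) (Fin n) ℝ := σ • (B + σ • Cm)⁻¹ * Matrix.diagonal p
      - s⁻¹ • Matrix.vecMulVec (fun _ => (1 : ℝ)) (fun i => α i * p i) with hD
  have hentry : ∀ i j, D i j = p j * (N i j).eval σ / (gσ * g0) := by
    intro i j
    have h1 : D i j = σ * ((σ * gσ)⁻¹ * (a i j).eval σ) * p j
        - (a i j).eval 0 * p j / g0 := by
      rw [hD]
      simp only [Matrix.sub_apply, Matrix.mul_diagonal, Matrix.smul_apply,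
        Matrix.vecMulVec_apply, smul_eq_mul, one_mul]
      rw [hinv]
      simp only [Matrix.smul_apply, smul_eq_mul]
      rw [hadj σ i j, ← hL i j]
    rw [h1]
    have hNeval : (N i j).eval σ = (a i j).eval σ * g0 - (a i j).eval 0 * gσ := by
      simp [hN, hgσdef]
    rw [hNeval]
    field_simp
  have hNzero : ∀ i j, (N i j).eval 0 = 0 := by
    intro i j
    simp [hN, hg0def]
  have hNfac : ∀ i j, (N i j).eval σ = σ * (N i j).divX.eval σ := by
    intro i j
    have h1 := Polynomial.divX_mul_X_add (N i j)
    have h2 := congrArg (Polynomial.eval σ) h1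
    rw [eval_add, eval_mul, eval_X, eval_C, Polynomial.coeff_zero_eq_eval_zero,
      hNzero i j, add_zero] at h2
    rw [← h2]; ring
  -- per-entry bound
  have hentrybd : ∀ i j, |D i j| ≤ σ * (|p j| * K i j * (2 / g0 ^ 2)) := by
    intro i j
    rw [hentry i j]
    have hQ : |(N i j).divX.eval σ| ≤ K i j := poly_eval_abs_le _ hσ.le hσ1
    have hNb : |(N i j).eval σ| ≤ σ * K i j := by
      rw [hNfac i j, abs_mul, abs_of_pos hσ]
      exact mul_le_mul_of_nonneg_left hQ hσ.le
    have hden : g0 ^ 2 / 2 ≤ |gσ * g0| := by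
      rw [abs_mul]
      calc g0 ^ 2 / 2 = (|g0|/2) * |g0| := by rw [← sq_abs]; ring
        _ ≤ |gσ| * |g0| := by
            apply mul_le_mul_of_nonneg_right hgσlb (abs_nonneg _)
    have hdenpos : 0 < g0 ^ 2 / 2 := by positivity
    calc |p j * (N i j).eval σ / (gσ * g0)|
        = |p j| * |(N i j).eval σ| / |gσ * g0| := by rw [abs_div, abs_mul]
      _ ≤ |p j| * (σ * K i j) / (g0 ^ 2 / 2) := by
          apply div_le_div₀ (by positivity)
            (mul_le_mul_of_nonneg_left hNb (abs_nonneg _)) hdenpos hden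
      _ = σ * (|p j| * K i j * (2 / g0 ^ 2)) := by
          field_simp
  -- assemble
  calc opNorm D ≤ ∑ i, ∑ j, |D i j| := opNorm_le_sum_abs D
    _ ≤ ∑ i, ∑ j, σ * (|p j| * K i j * (2 / g0 ^ 2)) :=
        Finset.sum_le_sum fun i _ => Finset.sum_le_sum fun j _ => hentrybd i j
    _ = (∑ i, ∑ j, |p j| * K i j * (2 / g0 ^ 2)) * σ := by
        rw [Finset.sum_mul]
        apply Finset.sum_congr rfl
        intro i _
        rw [Finset.sum_mul]
        apply Finset.sum_congr rfl
        intro j _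
        ring
    _ ≤ M * σ := by
        apply mul_le_mul_of_nonneg_right _ hσ.le
        rw [hM]
        linarith


theorem stmt10 {n : ℕ} (W : Matrix (Fin n) (Fin n) ℝ) (p α : Fin n → ℝ)
    (hWnn : ∀ i j, 0 ≤ W i j) (hWrs : ∀ i, ∑ j, W i j = 1)
    (hWirr : MatIrreducible W)
    (hα : α ᵥ* W = α) (hαnn : ∀ i, 0 ≤ α i) (hαsum : ∑ i, α i = 1)
    (hp : ∀ i, 0 < p i ∧ p i ≤ 1) :
    ∃ M > (0 : ℝ), ∃ σbar > (0 : ℝ), ∀ σ : ℝ, 0 < σ → σ ≤ σbar →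
      opNorm (σ • (1 - (1 - σ • Matrix.diagonal p) * W)⁻¹ * Matrix.diagonal p
          - (∑ i, α i * p i)⁻¹ •
            Matrix.vecMulVec (fun _ => (1 : ℝ)) (fun i => α i * p i))
        ≤ M * σ := by
  rcases Nat.eq_zero_or_pos n with hn | hn
  · -- trivial case n = 0
    refine ⟨1, one_pos, 1, one_pos, fun σ hσ hσ1 => ?_⟩
    subst hn
    have h := opNorm_le_sum_abs (σ • (1 - (1 - σ • Matrix.diagonal p) * W)⁻¹ * Matrix.diagonal p
          - (∑ i, α i * p i)⁻¹ •
            Matrix.vecMulVec (fun _ => (1 : ℝ)) (fun i => α i * p i))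
    simp only [Finset.univ_eq_empty, Finset.sum_empty] at h
    linarith
  -- main case
  have i0 : Fin n := ⟨0, hn⟩
  have hs : 0 < ∑ i, α i * p i := by
    obtain ⟨js, hjs⟩ : ∃ j, α j ≠ 0 := by
      by_contra h
      push_neg at h
      rw [Finset.sum_congr rfl (fun j _ => h j)] at hαsum
      simp at hαsum
    have hjs' : 0 < α js := lt_of_le_of_ne (hαnn js) (Ne.symm hjs)
    calc (0:ℝ) < α js * p js := mul_pos hjs' (hp js).1
      _ ≤ ∑ i, α i * p i :=
        Finset.single_le_sum (fun i _ => mul_nonneg (hαnn i) (hp i).1.le)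
          (Finset.mem_univ js)
  set s : ℝ := ∑ i, α i * p i with hsdef
  obtain ⟨c, hc0, hadj⟩ := adj_structure W α hn hWnn hWrs hWirr hα hαnn hαsum
  set Ap : Matrix (Fin n) (Fin n) ℝ[X] :=
    Apoly (1 - W) (Matrix.diagonal p * W) with hApdef
  set g : ℝ[X] := (Ap.adjugate *ᵥ fun j => Polynomial.C (p j)) i0 with hgdef
  have hmapeq : ∀ σ : ℝ, Ap.map (Polynomial.evalRingHom σ)
      = (1 - W) + σ • (Matrix.diagonal p * W) := fun σ => Apoly_map _ _ σ
  have hdetp : ∀ σ : ℝ, ((1 - W) + σ • (Matrix.diagonal p * W)).det = σ * g.eval σ := by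
    intro σ
    have h1 := Apoly_det_key W p hWrs i0
    have h2 := congrArg (Polynomial.eval σ) h1
    rw [Polynomial.eval_mul, Polynomial.eval_X] at h2
    rw [← hmapeq σ, ← RingHom.mapMatrix_apply, ← RingHom.map_det, Polynomial.coe_evalRingHom]
    exact h2.symm
  have hadjev : ∀ (σ : ℝ) i j, Polynomial.eval σ (Ap.adjugate i j)
      = ((1 - W) + σ • (Matrix.diagonal p * W)).adjugate i j := by
    intro σ i j
    have h1 := (Polynomial.evalRingHom σ).map_adjugate Ap
    rw [RingHom.mapMatrix_apply, RingHom.mapMatrix_apply, hmapeq σ] at h1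
    have h2 := congrFun (congrFun h1 i) j
    simpa [Matrix.map_apply] using h2
  have hadj0 : ∀ i j, Polynomial.eval 0 (Ap.adjugate i j) = c * α j := by
    intro i j
    rw [hadjev 0 i j]
    rw [zero_smul, add_zero]
    exact hadj i j
  have hg0 : g.eval 0 = c * s := by
    rw [hgdef]
    simp only [Matrix.mulVec, dotProduct]
    rw [Polynomial.eval_finset_sum]
    rw [hsdef, Finset.mul_sum]
    apply Finset.sum_congr rfl
    intro j _
    rw [Polynomial.eval_mul, Polynomial.eval_C, hadj0 i0 j]
    ring
  have hg0ne : g.eval 0 ≠ 0 := by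
    rw [hg0]
    exact mul_ne_zero hc0 (ne_of_gt hs)
  have hL : ∀ i j, Polynomial.eval 0 (Ap.adjugate i j) * p j / g.eval 0
      = s⁻¹ * (α j * p j) := by
    intro i j
    rw [hadj0 i j, hg0]
    field_simp
  obtain ⟨M, hM, σbar, hσbar, hbound⟩ :=
    main_analytic (1 - W) (Matrix.diagonal p * W) p α s g (fun i j => Ap.adjugate i j)
      hdetp hadjev hg0ne hL
  refine ⟨M, hM, σbar, hσbar, fun σ hσ hσb => ?_⟩
  have hrw : 1 - (1 - σ • Matrix.diagonal p) * W
      = (1 - W) + σ • (Matrix.diagonal p * W) := by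
    rw [Matrix.sub_mul, Matrix.one_mul, Matrix.smul_mul]
    rw [sub_sub_eq_add_sub, ← sub_add_eq_add_sub]
  rw [hrw]
  exact hbound σ hσ hσb
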